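/- For the two-queue tandem system with manufacturing blocking and intermediate buffer of capacity 0, define L(n) = max_{1 ≤ k ≤ n} { Σ_{j=1}^{k} τ_{0,j} + Σ_{j=k}^{n} max(τ_{1,j+1}, τ_{2,j}) } and U(n) = max_{1 ≤ k ≤ n} { Σ_{j=1}^{k} τ_{0,j} + Σ_{j=k}^{n} max(τ_{1,j}, τ_{2,j−1}) }, with the convention τ_{2,0} = 0. Then for every n ≥ 1, L(n) − max(τ_{1,n+1}, τ_{2,n}) ≤ D_1(n) ≤ U(n). -/

import Mathlib

open Finset

/-- Arrival epochs: `arr τ n = arr τ (n-1) + τ 0 n`, `arr τ 0 = 0`. -/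
noncomputable def arr (τ : ℕ → ℕ → ℝ) : ℕ → ℝ
  | 0 => 0
  | n + 1 => arr τ n + τ 0 (n + 1)

/-- Departure epochs `(D_1(n), D_2(n))` of the two-queue tandem system with
manufacturing blocking and intermediate buffer of capacity 0. -/
noncomputable def mb (τ : ℕ → ℕ → ℝ) : ℕ → ℝ × ℝ
  | 0 => (0, 0)
  | n + 1 =>
      let p := mb τ n
      let d1 := max (max (arr τ (n + 1)) p.1 + τ 1 (n + 1)) p.2
      (d1, max d1 p.2 + τ 2 (n + 1))

lemma arr_sum (τ : ℕ → ℕ → ℝ) : ∀ k, arr τ k = ∑ j ∈ Finset.Icc 1 k, τ 0 j := by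
  intro k
  induction k with
  | zero => simp [arr]
  | succ k ih =>
      rw [arr, ih, Finset.sum_Icc_succ_top (Nat.le_add_left 1 k)]

lemma mb_d2_le (τ : ℕ → ℕ → ℝ) (hτ : ∀ i n, 0 ≤ τ i n) :
    ∀ n, (mb τ n).2 ≤ (mb τ n).1 + τ 2 n := by
  intro n
  cases n with
  | zero => simpa [mb] using hτ 2 0
  | succ n =>
      simp only [mb]
      exact add_le_add_left (le_of_eq (max_eq_left (le_max_right _ _))) _

lemma mb_d2_ge (τ : ℕ → ℕ → ℝ) (hτ20 : τ 2 0 = 0) :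
    ∀ n, (mb τ n).1 + τ 2 n ≤ (mb τ n).2 := by
  intro n
  cases n with
  | zero => simp [mb, hτ20]
  | succ n =>
      simp only [mb]
      exact add_le_add_left (le_max_left _ _) _

lemma arr_le_mb (τ : ℕ → ℕ → ℝ) (hτ : ∀ i n, 0 ≤ τ i n) :
    ∀ n, arr τ n ≤ (mb τ n).1 := by
  intro n
  cases n with
  | zero => simp [mb, arr]
  | succ n =>
      simp only [mb]
      calc arr τ (n+1) ≤ max (arr τ (n+1)) (mb τ n).1 + τ 1 (n+1) := by
            have := hτ 1 (n+1); have := le_max_left (arr τ (n+1)) (mb τ n).1; linarith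
        _ ≤ _ := le_max_left _ _

lemma mb_step (τ : ℕ → ℕ → ℝ) (hτ20 : τ 2 0 = 0) (n : ℕ) :
    (mb τ n).1 + max (τ 1 (n+1)) (τ 2 n) ≤ (mb τ (n+1)).1 := by
  rw [← max_add_add_left]
  apply max_le
  · calc (mb τ n).1 + τ 1 (n+1)
        ≤ max (arr τ (n+1)) (mb τ n).1 + τ 1 (n+1) :=
          add_le_add_left (le_max_right _ _) _
      _ ≤ (mb τ (n+1)).1 := by simp only [mb]; exact le_max_left _ _
  · calc (mb τ n).1 + τ 2 n ≤ (mb τ n).2 := mb_d2_ge τ hτ20 n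
      _ ≤ (mb τ (n+1)).1 := by simp only [mb]; exact le_max_right _ _

lemma mb_step_ub (τ : ℕ → ℕ → ℝ) (hτ : ∀ i n, 0 ≤ τ i n) (n : ℕ) :
    (mb τ (n+1)).1 ≤ max (arr τ (n+1)) (mb τ n).1 + max (τ 1 (n+1)) (τ 2 n) := by
  simp only [mb]
  apply max_le
  · exact add_le_add_right (le_max_left _ _) _
  · calc (mb τ n).2 ≤ (mb τ n).1 + τ 2 n := mb_d2_le τ hτ n
      _ ≤ max (arr τ (n+1)) (mb τ n).1 + max (τ 1 (n+1)) (τ 2 n) :=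
          add_le_add (le_max_right _ _) (le_max_right _ _)

lemma mb_tel (τ : ℕ → ℕ → ℝ) (hτ20 : τ 2 0 = 0) :
    ∀ (k d : ℕ), (mb τ k).1 + ∑ j ∈ Finset.Ico k (k+d), max (τ 1 (j+1)) (τ 2 j)
      ≤ (mb τ (k+d)).1 := by
  intro k d
  induction d with
  | zero => simp
  | succ d ih =>
      rw [← Nat.add_assoc, Finset.sum_Ico_succ_top (Nat.le_add_right k d), ← add_assoc]
      calc (mb τ k).1 + (∑ j ∈ Finset.Ico k (k+d), max (τ 1 (j+1)) (τ 2 j))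
              + max (τ 1 (k+d+1)) (τ 2 (k+d))
          ≤ (mb τ (k+d)).1 + max (τ 1 (k+d+1)) (τ 2 (k+d)) := add_le_add_left ih _
        _ ≤ _ := mb_step τ hτ20 (k+d)

/-- With `L(n) = max_{1 ≤ k ≤ n} { ∑_{j=1}^{k} τ 0 j + ∑_{j=k}^{n} max (τ 1 (j+1)) (τ 2 j) }`
and `U(n) = max_{1 ≤ k ≤ n} { ∑_{j=1}^{k} τ 0 j + ∑_{j=k}^{n} max (τ 1 j) (τ 2 (j-1)) }`
(where `τ 2 0 = 0` by convention), one has, for every `n ≥ 1`,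
`L(n) - max (τ 1 (n+1)) (τ 2 n) ≤ D_1(n) ≤ U(n)`. -/
theorem mb_bounds (τ : ℕ → ℕ → ℝ) (hτ : ∀ i n, 0 ≤ τ i n) (hτ20 : τ 2 0 = 0)
    (n : ℕ) (hn : 1 ≤ n) :
    ((Finset.Icc 1 n).sup' (Finset.nonempty_Icc.mpr hn)
          (fun k => (∑ j ∈ Finset.Icc 1 k, τ 0 j)
            + ∑ j ∈ Finset.Icc k n, max (τ 1 (j + 1)) (τ 2 j)))
        - max (τ 1 (n + 1)) (τ 2 n) ≤ (mb τ n).1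
      ∧ (mb τ n).1 ≤
          (Finset.Icc 1 n).sup' (Finset.nonempty_Icc.mpr hn)
            (fun k => (∑ j ∈ Finset.Icc 1 k, τ 0 j)
              + ∑ j ∈ Finset.Icc k n, max (τ 1 j) (τ 2 (j - 1))) := by
  constructor
  · -- lower bound
    rw [sub_le_iff_le_add]
    apply Finset.sup'_le
    intro k hk
    obtain ⟨hk1, hkn⟩ := Finset.mem_Icc.mp hk
    have hsplit : ∑ j ∈ Finset.Icc k n, max (τ 1 (j + 1)) (τ 2 j)
        = (∑ j ∈ Finset.Ico k n, max (τ 1 (j + 1)) (τ 2 j)) + max (τ 1 (n+1)) (τ 2 n) := by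
      rw [← Finset.Ico_add_one_right_eq_Icc, Finset.sum_Ico_succ_top hkn]
    rw [← arr_sum, hsplit, ← add_assoc]
    have htel := mb_tel τ hτ20 k (n - k)
    rw [Nat.add_sub_cancel' hkn] at htel
    have h1 : arr τ k + (∑ j ∈ Finset.Ico k n, max (τ 1 (j + 1)) (τ 2 j)) ≤ (mb τ n).1 :=
      le_trans (add_le_add_left (arr_le_mb τ hτ k) _) htel
    exact add_le_add_left h1 _
  · -- upper bound
    induction n, hn using Nat.le_induction with
    | base =>
        apply Finset.le_sup'_of_le _ (Finset.mem_Icc.mpr ⟨le_refl 1, le_refl 1⟩)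
        simp only [mb, arr, Finset.Icc_self, Finset.sum_singleton]
        have h0 : (0:ℝ) + τ 0 1 = τ 0 1 := zero_add _
        apply max_le
        · have h1 : max ((0:ℝ) + τ 0 1) 0 = τ 0 1 := by
            rw [zero_add]; exact max_eq_left (hτ 0 1)
          rw [h1]
          exact add_le_add_right (le_max_left _ _) _
        · have := hτ 0 1
          have := hτ 1 1
          have := le_max_left (τ 1 1) (τ 2 0)
          linarith
    | succ n hn ih =>
        have key := mb_step_ub τ hτ n
        apply le_trans key
        rw [← max_add_add_right]
        apply max_le
        · -- arr (n+1) + m(n+1) is the k = n+1 term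
          apply Finset.le_sup'_of_le _
            (Finset.mem_Icc.mpr ⟨Nat.le_add_left 1 n, le_refl (n+1)⟩)
          rw [← arr_sum]
          simp [Nat.add_sub_cancel]
        · -- D1(n) + m(n+1) via ih
          obtain ⟨k, hk, hUk⟩ := Finset.exists_mem_eq_sup'
            (Finset.nonempty_Icc.mpr hn)
            (fun k => (∑ j ∈ Finset.Icc 1 k, τ 0 j)
              + ∑ j ∈ Finset.Icc k n, max (τ 1 j) (τ 2 (j - 1)))
          obtain ⟨hk1, hkn⟩ := Finset.mem_Icc.mp hk
          have h2 : (mb τ n).1 + max (τ 1 (n+1)) (τ 2 n)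
              ≤ ((∑ j ∈ Finset.Icc 1 k, τ 0 j)
                + ∑ j ∈ Finset.Icc k n, max (τ 1 j) (τ 2 (j - 1)))
                + max (τ 1 (n+1)) (τ 2 n) := by
            apply add_le_add_left
            rw [← hUk] at *
            exact ih
          apply le_trans h2
          apply Finset.le_sup'_of_le _
            (Finset.mem_Icc.mpr ⟨hk1, le_trans hkn (Nat.le_succ n)⟩)
          rw [add_assoc]
          apply add_le_add_right
          rw [Finset.sum_Icc_succ_top (le_trans hkn (Nat.le_succ n))]
          simp [Nat.add_sub_cancel]
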